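/- Let μ be a nonnegative Radon measure on an open set Ω ⊂ ℝⁿ containing the closed unit ball B₁, and let m be a positive integer. Then limsup_{r→0⁺} r^m ∫_{B₁ \ B_r} |y|^{-(n-1+m)} dμ(y) ≤ C(n,m) · limsup_{r→0⁺} μ(B_r)/r^{n-1}, where C(n,m) is a constant depending only on n and m. -/

import Mathlib

open MeasureTheory Metric Filter
open scoped Topology NNReal ENNReal

/-- **Annulus Riesz potential estimate.** For a nonnegative Radon measure `μ` on an open set
`Ω ⊆ ℝⁿ` containing the closed unit ball, and `m ≥ 1`,
`limsup_{r→0⁺} r^m ∫_{B₁ \ B_r} |y|^{-(n-1+m)} dμ ≤ C(n,m) · limsup_{r→0⁺} μ(B_r)/r^{n-1}`. -/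
theorem stmt0 (n m : ℕ) (hm : 0 < m) :
    ∃ C : NNReal, 0 < C ∧
      ∀ (Ω : Set (EuclideanSpace ℝ (Fin n))), IsOpen Ω →
        Metric.closedBall (0 : EuclideanSpace ℝ (Fin n)) 1 ⊆ Ω →
        ∀ (μ : Measure (EuclideanSpace ℝ (Fin n))), IsFiniteMeasureOnCompacts μ →
          μ Ωᶜ = 0 →
          Filter.limsup
              (fun r : ℝ =>
                ENNReal.ofReal (r ^ m) *
                  ∫⁻ y in Metric.ball (0 : EuclideanSpace ℝ (Fin n)) 1 \ Metric.ball 0 r,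
                    ENNReal.ofReal (‖y‖ ^ (-((n : ℝ) - 1 + (m : ℝ)))) ∂μ)
              (nhdsWithin 0 (Set.Ioi 0)) ≤
            (C : ENNReal) *
              Filter.limsup
                (fun r : ℝ =>
                  μ (Metric.ball (0 : EuclideanSpace ℝ (Fin n)) r) /
                    ENNReal.ofReal (r ^ ((n : ℝ) - 1)))
                (nhdsWithin 0 (Set.Ioi 0)) := by
  rcases Nat.eq_zero_or_pos n with hn0 | hn1
  · -- trivial case `n = 0`: the space is a single point and the annulus is empty
    subst hn0
    refine ⟨1, one_pos, fun Ω _ _ μ _ _ => ?_⟩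
    have hev : ∀ᶠ r : ℝ in 𝓝[>] (0:ℝ),
        ENNReal.ofReal (r ^ m) *
            (∫⁻ y in Metric.ball (0 : EuclideanSpace ℝ (Fin 0)) 1 \ Metric.ball 0 r,
              ENNReal.ofReal (‖y‖ ^ (-(((0:ℕ) : ℝ) - 1 + (m : ℝ)))) ∂μ)
          ≤ (0 : ℝ≥0∞) := by
      filter_upwards [self_mem_nhdsWithin] with r hr
      have hball : Metric.ball (0 : EuclideanSpace ℝ (Fin 0)) r = Set.univ := by
        ext y
        simp [Metric.mem_ball, Subsingleton.elim y 0, Set.mem_Ioi.1 hr]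
      rw [hball]
      simp
    exact le_trans (limsup_le_of_le (h := hev)) zero_le
  · -- main case `n ≥ 1`
    have hn1' : (1 : ℝ) ≤ (n : ℝ) := by exact_mod_cast hn1
    have hm' : (1 : ℝ) ≤ (m : ℝ) := by exact_mod_cast hm
    set a : ℝ := (n : ℝ) - 1 + (m : ℝ) with ha_def
    have ha : 0 < a := by rw [ha_def]; linarith
    have hane : a ≠ 0 := ha.ne'
    set θ : ℝ := ((n : ℝ) - 1) / a with hθ_def
    have hθ0 : 0 ≤ θ := div_nonneg (by linarith) ha.le
    have hθ1 : θ < 1 := (div_lt_one ha).2 (by rw [ha_def]; linarith)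
    have h1θ : 0 < 1 - θ := by linarith
    have hC0 : 0 < 1 / (1 - θ) := by positivity
    set C : ℝ≥0∞ := ENNReal.ofReal (1 / (1 - θ)) with hC_def
    have hCne : C ≠ 0 := (ENNReal.ofReal_pos.2 hC0).ne'
    have hCtop : C ≠ ∞ := ENNReal.ofReal_ne_top
    refine ⟨(1 / (1 - θ)).toNNReal, Real.toNNReal_pos.2 hC0, fun Ω hΩ hB μ hμc hμΩ => ?_⟩
    have hCcoe : ((((1 : ℝ) / (1 - θ)).toNNReal : ℝ≥0) : ℝ≥0∞) = C := rfl
    rw [hCcoe]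
    haveI : IsFiniteMeasureOnCompacts μ := hμc
    set L : ℝ≥0∞ :=
      Filter.limsup
        (fun r : ℝ =>
          μ (Metric.ball (0 : EuclideanSpace ℝ (Fin n)) r) /
            ENNReal.ofReal (r ^ ((n : ℝ) - 1))) (𝓝[>] (0:ℝ)) with hL_def
    have hμB : μ (Metric.closedBall (0 : EuclideanSpace ℝ (Fin n)) 1) ≠ ∞ :=
      (isCompact_closedBall _ _).measure_lt_top.ne
    -- measurability of real powers
    have hrpow_meas : ∀ c : ℝ, Measurable fun x : ℝ => x ^ c := by
      intro c
      refine measurable_of_continuousOn_compl_singleton (0:ℝ) ?_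
      exact fun x hx => (Real.continuousAt_rpow_const x c (Or.inl hx)).continuousWithinAt
    -- the key estimate: for any `K` above the limsup `L`, the LHS limsup is at most `C * K`
    have key : ∀ K : ℝ≥0∞, L < K →
        Filter.limsup
          (fun r : ℝ =>
            ENNReal.ofReal (r ^ m) *
              ∫⁻ y in Metric.ball (0 : EuclideanSpace ℝ (Fin n)) 1 \ Metric.ball 0 r,
                ENNReal.ofReal (‖y‖ ^ (-a)) ∂μ) (𝓝[>] (0:ℝ)) ≤ C * K := by
      intro K hK
      obtain ⟨u, hu, hsub⟩ :=
        mem_nhdsGT_iff_exists_Ioo_subset.1 (eventually_lt_of_limsup_lt hK)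
      rw [Set.mem_Ioi] at hu
      have hKball : ∀ s : ℝ, s ∈ Set.Ioo (0:ℝ) u →
          μ (Metric.ball (0 : EuclideanSpace ℝ (Fin n)) s)
            ≤ K * ENNReal.ofReal (s ^ ((n : ℝ) - 1)) := by
        intro s hs
        have h1 : μ (Metric.ball (0 : EuclideanSpace ℝ (Fin n)) s) /
            ENNReal.ofReal (s ^ ((n : ℝ) - 1)) < K := hsub hs
        have hden : ENNReal.ofReal (s ^ ((n : ℝ) - 1)) ≠ 0 := by
          simp only [ne_eq, ENNReal.ofReal_eq_zero, not_le]
          exact Real.rpow_pos_of_pos hs.1 _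
        exact ((ENNReal.div_lt_iff (Or.inl hden) (Or.inl ENNReal.ofReal_ne_top)).1 h1).le
      -- eventual pointwise bound
      have hbound : ∀ᶠ r in 𝓝[>] (0:ℝ),
          ENNReal.ofReal (r ^ m) *
              (∫⁻ y in Metric.ball (0 : EuclideanSpace ℝ (Fin n)) 1 \ Metric.ball 0 r,
                ENNReal.ofReal (‖y‖ ^ (-a)) ∂μ)
            ≤ ENNReal.ofReal (r ^ m) *
                (μ (Metric.closedBall (0 : EuclideanSpace ℝ (Fin n)) 1) *
                  ENNReal.ofReal (u ^ (-a))) + C * K := by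
        filter_upwards [Ioo_mem_nhdsGT_of_mem ⟨le_refl (0:ℝ), hu⟩] with r hr
        obtain ⟨hr0, hru⟩ := hr
        have hu0 : 0 < u := lt_trans hr0 hru
        set T : ℝ := r ^ (-a) with hT_def
        set D : ℝ := u ^ (-a) with hD_def
        have hT0 : 0 < T := Real.rpow_pos_of_pos hr0 _
        have hD0 : 0 < D := Real.rpow_pos_of_pos hu0 _
        set Sr : Set (EuclideanSpace ℝ (Fin n)) :=
          Metric.ball (0 : EuclideanSpace ℝ (Fin n)) 1 \ Metric.ball 0 r with hSr_def
        have hSrm : MeasurableSet Sr := measurableSet_ball.diff measurableSet_ball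
        have hinv : ∀ x : ℝ, 0 < x → (x ^ (-a)) ^ (-(1/a)) = x := by
          intro x hx
          rw [← Real.rpow_mul hx.le]
          rw [show -a * -(1/a) = 1 by field_simp, Real.rpow_one]
        -- bound on the superlevel sets
        have hnu : ∀ t ∈ Set.Ioi (0:ℝ),
            (μ.restrict Sr) {y : EuclideanSpace ℝ (Fin n) | t < ‖y‖ ^ (-a)}
              ≤ (Set.Ioc (0:ℝ) D).indicator
                    (fun _ => μ (Metric.closedBall (0 : EuclideanSpace ℝ (Fin n)) 1)) t
                + (Set.Ioc (0:ℝ) T).indicator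
                    (fun t => K * ENNReal.ofReal (t ^ (-θ))) t := by
          intro t ht
          rw [Set.mem_Ioi] at ht
          rw [Measure.restrict_apply' hSrm]
          rcases le_or_gt t T with h2 | h2
          · rcases le_or_gt t D with h1 | h1
            · -- small `t`: bound by the measure of the unit ball
              calc μ ({y : EuclideanSpace ℝ (Fin n) | t < ‖y‖ ^ (-a)} ∩ Sr)
                  ≤ μ (Metric.closedBall (0 : EuclideanSpace ℝ (Fin n)) 1) := by
                    refine measure_mono fun y hy => ball_subset_closedBall hy.2.1
                _ = (Set.Ioc (0:ℝ) D).indicator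
                      (fun _ => μ (Metric.closedBall (0 : EuclideanSpace ℝ (Fin n)) 1)) t :=
                    (Set.indicator_of_mem (Set.mem_Ioc.2 ⟨ht, h1⟩)
                      (fun _ => μ (Metric.closedBall (0 : EuclideanSpace ℝ (Fin n)) 1))).symm
                _ ≤ _ := le_self_add
            · -- middle range: bound using the density hypothesis
              have hs0 : (0:ℝ) < t ^ (-(1/a)) := Real.rpow_pos_of_pos ht _
              have hsu : t ^ (-(1/a)) < u := by
                have h3 : t ^ (-(1/a)) < D ^ (-(1/a)) :=
                  Real.rpow_lt_rpow_of_neg hD0 h1 (neg_lt_zero.2 (by positivity))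
                rwa [hD_def, hinv u hu0] at h3
              have hsubset : {y : EuclideanSpace ℝ (Fin n) | t < ‖y‖ ^ (-a)} ∩ Sr
                  ⊆ Metric.ball (0 : EuclideanSpace ℝ (Fin n)) (t ^ (-(1/a))) := by
                rintro y ⟨hy1, hy2⟩
                have hyr : r ≤ ‖y‖ := by
                  have h4 := hy2.2
                  simpa [Metric.mem_ball, dist_zero_right, not_lt] using h4
                have hy0 : (0:ℝ) < ‖y‖ := lt_of_lt_of_le hr0 hyr
                have h5 : (‖y‖ ^ (-a)) ^ (-(1/a)) < t ^ (-(1/a)) :=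
                  Real.rpow_lt_rpow_of_neg ht hy1 (neg_lt_zero.2 (by positivity))
                rw [hinv _ hy0] at h5
                simpa [Metric.mem_ball, dist_zero_right] using h5
              calc μ ({y : EuclideanSpace ℝ (Fin n) | t < ‖y‖ ^ (-a)} ∩ Sr)
                  ≤ μ (Metric.ball (0 : EuclideanSpace ℝ (Fin n)) (t ^ (-(1/a)))) :=
                    measure_mono hsubset
                _ ≤ K * ENNReal.ofReal ((t ^ (-(1/a))) ^ ((n : ℝ) - 1)) :=
                    hKball _ ⟨hs0, hsu⟩
                _ = K * ENNReal.ofReal (t ^ (-θ)) := by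
                    rw [← Real.rpow_mul ht.le]
                    rw [show -(1/a) * ((n : ℝ) - 1) = -θ by rw [hθ_def]; ring]
                _ = (Set.Ioc (0:ℝ) T).indicator (fun t => K * ENNReal.ofReal (t ^ (-θ))) t :=
                    (Set.indicator_of_mem (Set.mem_Ioc.2 ⟨ht, h2⟩)
                      (fun t => K * ENNReal.ofReal (t ^ (-θ)))).symm
                _ ≤ _ := le_add_self
          · -- large `t`: the set is empty
            have hempty : {y : EuclideanSpace ℝ (Fin n) | t < ‖y‖ ^ (-a)} ∩ Sr = ∅ := by
              rw [Set.eq_empty_iff_forall_notMem]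
              rintro y ⟨hy1, hy2⟩
              have hyr : r ≤ ‖y‖ := by
                have h4 := hy2.2
                simpa [Metric.mem_ball, dist_zero_right, not_lt] using h4
              have hy0 : (0:ℝ) < ‖y‖ := lt_of_lt_of_le hr0 hyr
              have h5 : ‖y‖ ^ (-a) ≤ r ^ (-a) :=
                Real.rpow_le_rpow_of_nonpos hr0 hyr (by linarith)
              have h6 : t < T := lt_of_lt_of_le hy1 h5
              exact absurd h6 (not_lt.2 h2.le)
            rw [hempty, measure_empty]
            exact zero_le
        -- the main integral estimate
        have hmain : (∫⁻ y in Sr, ENNReal.ofReal (‖y‖ ^ (-a)) ∂μ)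
            ≤ μ (Metric.closedBall (0 : EuclideanSpace ℝ (Fin n)) 1) * ENNReal.ofReal D
              + K * ENNReal.ofReal (T ^ (1 - θ) / (1 - θ)) := by
          have hmes : Measurable fun y : EuclideanSpace ℝ (Fin n) => ‖y‖ ^ (-a) :=
            (hrpow_meas (-a)).comp measurable_norm
          rw [lintegral_eq_lintegral_meas_lt (μ.restrict Sr)
              (ae_of_all _ fun y => Real.rpow_nonneg (norm_nonneg y) (-a)) hmes.aemeasurable]
          have step1 : (∫⁻ t in Set.Ioi (0:ℝ),
                (μ.restrict Sr) {y : EuclideanSpace ℝ (Fin n) | t < ‖y‖ ^ (-a)})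
              ≤ ∫⁻ t in Set.Ioi (0:ℝ),
                  ((Set.Ioc (0:ℝ) D).indicator
                      (fun _ => μ (Metric.closedBall (0 : EuclideanSpace ℝ (Fin n)) 1)) t
                    + (Set.Ioc (0:ℝ) T).indicator
                      (fun t => K * ENNReal.ofReal (t ^ (-θ))) t) :=
            lintegral_mono_ae ((ae_restrict_iff' measurableSet_Ioi).2 (ae_of_all _ hnu))
          refine le_trans step1 ?_
          rw [lintegral_add_left (measurable_const.indicator measurableSet_Ioc)]
          have piece1 : (∫⁻ t in Set.Ioi (0:ℝ),
                (Set.Ioc (0:ℝ) D).indicator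
                  (fun _ => μ (Metric.closedBall (0 : EuclideanSpace ℝ (Fin n)) 1)) t)
              = μ (Metric.closedBall (0 : EuclideanSpace ℝ (Fin n)) 1) * ENNReal.ofReal D := by
            rw [lintegral_indicator measurableSet_Ioc, setLIntegral_const,
              Measure.restrict_apply measurableSet_Ioc,
              Set.inter_eq_left.2 Set.Ioc_subset_Ioi_self, Real.volume_Ioc, sub_zero]
          have piece2 : (∫⁻ t in Set.Ioi (0:ℝ),
                (Set.Ioc (0:ℝ) T).indicator (fun t => K * ENNReal.ofReal (t ^ (-θ))) t)
              = K * ENNReal.ofReal (T ^ (1 - θ) / (1 - θ)) := by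
            rw [lintegral_indicator measurableSet_Ioc,
              Measure.restrict_restrict measurableSet_Ioc,
              Set.inter_eq_left.2 Set.Ioc_subset_Ioi_self,
              lintegral_const_mul K ((hrpow_meas (-θ)).ennreal_ofReal)]
            congr 1
            have hint : IntervalIntegrable (fun t : ℝ => t ^ (-θ)) volume 0 T :=
              intervalIntegral.intervalIntegrable_rpow' (by linarith)
            have hnn : 0 ≤ᵐ[volume.restrict (Set.Ioc (0:ℝ) T)] fun t : ℝ => t ^ (-θ) :=
              (ae_restrict_iff' measurableSet_Ioc).2
                (ae_of_all _ fun t ht => Real.rpow_nonneg ht.1.le _)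
            rw [← MeasureTheory.ofReal_integral_eq_lintegral_ofReal hint.1 hnn]
            congr 1
            rw [← intervalIntegral.integral_of_le hT0.le,
              integral_rpow (Or.inl (by linarith : (-1:ℝ) < -θ)),
              Real.zero_rpow (by linarith : -θ + 1 ≠ 0),
              show -θ + 1 = 1 - θ by ring, sub_zero]
          rw [piece1, piece2]
        -- conclude the pointwise bound
        have hsecond : ENNReal.ofReal (r ^ m) * (K * ENNReal.ofReal (T ^ (1 - θ) / (1 - θ)))
            = C * K := by
          have hTm : T ^ (1 - θ) = r ^ (-(m:ℝ)) := by
            rw [hT_def, ← Real.rpow_mul hr0.le]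
            congr 1
            rw [hθ_def, ha_def]
            have hane' : (n:ℝ) - 1 + (m:ℝ) ≠ 0 := ha.ne'
            field_simp
            ring
          have hrm : (r:ℝ) ^ (m:ℕ) * r ^ (-(m:ℝ)) = 1 := by
            rw [← Real.rpow_natCast r m, ← Real.rpow_add hr0, add_neg_cancel, Real.rpow_zero]
          calc ENNReal.ofReal (r ^ m) * (K * ENNReal.ofReal (T ^ (1 - θ) / (1 - θ)))
              = (ENNReal.ofReal (r ^ m) * ENNReal.ofReal (T ^ (1 - θ) / (1 - θ))) * K := by
                ring
            _ = ENNReal.ofReal (r ^ m * (T ^ (1 - θ) / (1 - θ))) * K := by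
                rw [ENNReal.ofReal_mul (by positivity)]
            _ = C * K := by
                congr 1
                rw [hC_def]
                congr 1
                rw [hTm, mul_div_assoc', hrm]
        calc ENNReal.ofReal (r ^ m) * (∫⁻ y in Sr, ENNReal.ofReal (‖y‖ ^ (-a)) ∂μ)
            ≤ ENNReal.ofReal (r ^ m) *
                (μ (Metric.closedBall (0 : EuclideanSpace ℝ (Fin n)) 1) * ENNReal.ofReal D
                  + K * ENNReal.ofReal (T ^ (1 - θ) / (1 - θ))) :=
              mul_le_mul_right hmain _
          _ = ENNReal.ofReal (r ^ m) *
                (μ (Metric.closedBall (0 : EuclideanSpace ℝ (Fin n)) 1) * ENNReal.ofReal D)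
              + ENNReal.ofReal (r ^ m) * (K * ENNReal.ofReal (T ^ (1 - θ) / (1 - θ))) :=
              mul_add _ _ _
          _ = ENNReal.ofReal (r ^ m) *
                (μ (Metric.closedBall (0 : EuclideanSpace ℝ (Fin n)) 1) * ENNReal.ofReal D)
              + C * K := by rw [hsecond]
      -- pass to the limsup
      have h0 : Tendsto (fun r : ℝ => ENNReal.ofReal (r ^ m)) (𝓝[>] (0:ℝ)) (𝓝 0) := by
        have h1 : Tendsto (fun r : ℝ => ENNReal.ofReal (r ^ m)) (𝓝 (0:ℝ))
            (𝓝 (ENNReal.ofReal ((0:ℝ) ^ m))) :=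
          (ENNReal.continuous_ofReal.comp (continuous_pow m)).tendsto 0
        simpa [zero_pow hm.ne'] using h1.mono_left nhdsWithin_le_nhds
      have htends : Tendsto
          (fun r : ℝ => ENNReal.ofReal (r ^ m) *
              (μ (Metric.closedBall (0 : EuclideanSpace ℝ (Fin n)) 1) *
                ENNReal.ofReal (u ^ (-a))) + C * K)
          (𝓝[>] (0:ℝ)) (𝓝 (C * K)) := by
        have h1 : Tendsto
            (fun r : ℝ => ENNReal.ofReal (r ^ m) *
                (μ (Metric.closedBall (0 : EuclideanSpace ℝ (Fin n)) 1) *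
                  ENNReal.ofReal (u ^ (-a)))) (𝓝[>] (0:ℝ)) (𝓝 0) := by
          have h2 := ENNReal.Tendsto.mul_const h0
            (b := μ (Metric.closedBall (0 : EuclideanSpace ℝ (Fin n)) 1) *
              ENNReal.ofReal (u ^ (-a)))
            (Or.inr (ENNReal.mul_ne_top hμB ENNReal.ofReal_ne_top))
          simpa using h2
        simpa using h1.add (tendsto_const_nhds (x := C * K))
      calc Filter.limsup
            (fun r : ℝ =>
              ENNReal.ofReal (r ^ m) *
                ∫⁻ y in Metric.ball (0 : EuclideanSpace ℝ (Fin n)) 1 \ Metric.ball 0 r,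
                  ENNReal.ofReal (‖y‖ ^ (-a)) ∂μ) (𝓝[>] (0:ℝ))
          ≤ Filter.limsup
              (fun r : ℝ => ENNReal.ofReal (r ^ m) *
                  (μ (Metric.closedBall (0 : EuclideanSpace ℝ (Fin n)) 1) *
                    ENNReal.ofReal (u ^ (-a))) + C * K) (𝓝[>] (0:ℝ)) :=
            limsup_le_limsup hbound
        _ = C * K := htends.limsup_eq
    -- conclude
    rcases eq_or_ne L ⊤ with hL | hL
    · rw [hL, ENNReal.mul_top hCne]
      exact le_top
    · refine ENNReal.le_of_forall_pos_le_add fun ε hε hfin => ?_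
      have hεC : (ε : ℝ≥0∞) / C ≠ 0 := by
        simp [ENNReal.div_eq_zero_iff, hCtop, hε.ne']
      calc Filter.limsup
            (fun r : ℝ =>
              ENNReal.ofReal (r ^ m) *
                ∫⁻ y in Metric.ball (0 : EuclideanSpace ℝ (Fin n)) 1 \ Metric.ball 0 r,
                  ENNReal.ofReal (‖y‖ ^ (-a)) ∂μ) (𝓝[>] (0:ℝ))
          ≤ C * (L + (ε : ℝ≥0∞) / C) := key _ (ENNReal.lt_add_right hL hεC)
        _ = C * L + C * ((ε : ℝ≥0∞) / C) := mul_add _ _ _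
        _ = C * L + ε := by rw [ENNReal.mul_div_cancel hCne hCtop]
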